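/- Let C = [C_1,...,C_r] be a normal triangular set with constant-free initials only in the parameters, and define C* = [C_1, prem(C_2,[C_1]), ..., prem(C_r,[C_1,...,C_{r−1}])]. Then C* is a normal triangular set, and in fact ini(C_i*) = I_1^{q_1}···I_{i−1}^{q_{i−1}} I_i for suitable nonnegative integers q_j, where I_j = ini(C_j). -/

import Mathlib

open MvPolynomial

namespace CharDec

variable {K : Type*} [Field K] {σ : Type*} [LinearOrder σ]

/-- Lexicographic comparison of exponent vectors (larger variables dominate):
`a ≤ b` iff `a = b` or at the greatest index where they differ, `a` is smaller. -/
def lexLe (a b : σ →₀ ℕ) : Prop :=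
  a = b ∨ ∃ i : σ, a i < b i ∧ ∀ j : σ, i < j → a j = b j

/-- `m` is the leading monomial of `f` with respect to the lex term ordering. -/
def IsLeadMon (f : MvPolynomial σ K) (m : σ →₀ ℕ) : Prop :=
  m ∈ f.support ∧ ∀ m' ∈ f.support, lexLe m' m

/-- `f` has leading (greatest actually occurring) variable `i`. -/
def HasLV (f : MvPolynomial σ K) (i : σ) : Prop :=
  i ∈ f.vars ∧ ∀ j ∈ f.vars, j ≤ i

/-- The coefficient of `(X i) ^ d` in `f`, as a polynomial in the remaining variables. -/
noncomputable def coeffWrt (i : σ) (d : ℕ) (f : MvPolynomial σ K) :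
    MvPolynomial σ K :=
  ∑ m ∈ f.support.filter (fun m => m i = d), monomial (m.update i 0) (f.coeff m)

/-- The initial (leading coefficient in the leading variable) of `f` with
respect to the variable `i`. -/
noncomputable def initialWrt (i : σ) (f : MvPolynomial σ K) : MvPolynomial σ K :=
  coeffWrt i (f.degreeOf i) f

/-- `R` is the pseudo-remainder of `P` on pseudo-division by `Q` with respect
to the variable `y` (classical pseudo-division, with the exponent
`deg P - deg Q + 1` when `deg P ≥ deg Q`, and `0` otherwise). -/
def IsPrem (y : σ) (Q P R : MvPolynomial σ K) : Prop :=
  ∃ A : MvPolynomial σ K,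
    (initialWrt y Q) ^ (P.degreeOf y + 1 - Q.degreeOf y) * P = A * Q + R ∧
    R.degreeOf y < Q.degreeOf y

/-- `IterPrem P L R` : `R` is the iterated pseudo-remainder of `P` by the
list `L` of pairs (leading variable, divisor), divisors being used from the
head of the list on. -/
def IterPrem : MvPolynomial σ K → List (σ × MvPolynomial σ K) →
    MvPolynomial σ K → Prop
  | P, [], R => R = P
  | P, e :: L, R => ∃ S, IsPrem e.1 e.2 P S ∧ IterPrem S L R

/-- A triangular set: a list of (leading variable, polynomial) pairs with
strictly increasing leading variables. -/
structure TriSet (K : Type*) [Field K] (σ : Type*) [LinearOrder σ] where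
  elems : List (σ × MvPolynomial σ K)
  sorted : elems.Pairwise (fun e e' => e.1 < e'.1)
  hlv : ∀ e ∈ elems, HasLV e.2 e.1

namespace TriSet

/-- The list of leading variables of a triangular set. -/
def lvs (T : TriSet K σ) : List σ := T.elems.map Prod.fst

/-- The list of polynomials of a triangular set. -/
def polys (T : TriSet K σ) : List (MvPolynomial σ K) := T.elems.map Prod.snd

/-- A variable is a parameter of `T` if it is not a leading variable of `T`. -/
def IsParam (T : TriSet K σ) (j : σ) : Prop := j ∉ T.lvs

/-- `T` is normal: every initial involves only the parameters of `T`. -/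
def Normal (T : TriSet K σ) : Prop :=
  ∀ e ∈ T.elems, ∀ j ∈ (initialWrt e.1 e.2).vars, T.IsParam j

/-- `T` is zero-dimensional: every variable is a leading variable of `T`. -/
def ZeroDim (T : TriSet K σ) : Prop := ∀ i : σ, i ∈ T.lvs

/-- The product of the initials of `T`. -/
noncomputable def prodInit (T : TriSet K σ) : MvPolynomial σ K :=
  (T.elems.map fun e => initialWrt e.1 e.2).prod

/-- The ideal generated by the polynomials of `T`. -/
noncomputable def ideal (T : TriSet K σ) : Ideal (MvPolynomial σ K) :=
  Ideal.span {p | ∃ e ∈ T.elems, p = e.2}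

end TriSet

/-- The saturation `I : J^∞` of an ideal `I` by an element `J`. -/
def satBy (I : Ideal (MvPolynomial σ K)) (J : MvPolynomial σ K) :
    Ideal (MvPolynomial σ K) where
  carrier := {p | ∃ k : ℕ, J ^ k * p ∈ I}
  zero_mem' := ⟨0, by simp⟩
  add_mem' := by
    rintro a b ⟨k, hk⟩ ⟨l, hl⟩
    refine ⟨k + l, ?_⟩
    have h : J ^ (k + l) * (a + b) = J ^ l * (J ^ k * a) + J ^ k * (J ^ l * b) := by ring
    rw [h]
    exact add_mem (Ideal.mul_mem_left _ _ hk) (Ideal.mul_mem_left _ _ hl)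
  smul_mem' := by
    rintro c a ⟨k, hk⟩
    refine ⟨k, ?_⟩
    have h : J ^ k * (c • a) = c * (J ^ k * a) := by rw [smul_eq_mul]; ring
    rw [h]
    exact Ideal.mul_mem_left _ _ hk

namespace TriSet

/-- The saturated ideal `sat(T) = ⟨T⟩ : (∏ initials)^∞` of a triangular set. -/
noncomputable def sat (T : TriSet K σ) : Ideal (MvPolynomial σ K) :=
  satBy T.ideal T.prodInit

/-- The triangular set formed by the first `i` elements of `T`. -/
def take (T : TriSet K σ) (i : ℕ) : TriSet K σ :=
  ⟨T.elems.take i, T.sorted.sublist (List.take_sublist i T.elems),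
    fun e he => T.hlv e (List.mem_of_mem_take he)⟩

/-- `T` is a regular set: each initial is neither zero nor a zero-divisor
modulo the saturated ideal of the preceding subset. -/
def Regular (T : TriSet K σ) : Prop :=
  ∀ i : ℕ, ∀ h : i < T.elems.length,
    initialWrt (T.elems.get ⟨i, h⟩).1 (T.elems.get ⟨i, h⟩).2 ∉ (T.take i).sat ∧
    ∀ p : MvPolynomial σ K,
      initialWrt (T.elems.get ⟨i, h⟩).1 (T.elems.get ⟨i, h⟩).2 * p ∈ (T.take i).sat →
        p ∈ (T.take i).sat

end TriSet

/-- The zero set, in (the algebraic closure of `K`)^σ, of a set of polynomials. -/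
def zeroSet (S : Set (MvPolynomial σ K)) : Set (σ → AlgebraicClosure K) :=
  {x | ∀ p ∈ S, aeval x p = 0}

/-- `Zero(T / ini(T))` : the common zeros of `T` at which no initial of `T` vanishes. -/
def TriSet.zeroQuasi (T : TriSet K σ) : Set (σ → AlgebraicClosure K) :=
  {x | (∀ e ∈ T.elems, aeval x e.2 = 0) ∧
       (∀ e ∈ T.elems, aeval x (initialWrt e.1 e.2) ≠ 0)}

/-- `G` is a (finite) Gröbner basis of `I` with respect to the lex term
ordering: `G ⊆ I` and the leading monomial of every nonzero element of `I` is
divisible by the leading monomial of some element of `G`. -/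
def IsGB (G : Set (MvPolynomial σ K)) (I : Ideal (MvPolynomial σ K)) : Prop :=
  G.Finite ∧ G ⊆ ↑I ∧
  ∀ f ∈ I, f ≠ 0 → ∃ g ∈ G, ∃ mf mg, IsLeadMon f mf ∧ IsLeadMon g mg ∧ ∀ j, mg j ≤ mf j

/-- `G` is the reduced lex Gröbner basis of `I`. -/
def IsReducedGB (G : Set (MvPolynomial σ K)) (I : Ideal (MvPolynomial σ K)) : Prop :=
  IsGB G I ∧ (0 : MvPolynomial σ K) ∉ G ∧
  (∀ g ∈ G, ∀ m, IsLeadMon g m → g.coeff m = 1) ∧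
  (∀ g ∈ G, ∀ g' ∈ G, g' ≠ g → ∀ m ∈ g.support, ∀ m', IsLeadMon g' m' →
    ¬ (∀ j, m' j ≤ m j))

/-- `C` is the W-characteristic set extracted from the (reduced lex Gröbner
basis) `G`: for each leading variable occurring in `G`, `C` contains the
lex-minimal element of `G` with that leading variable. -/
def IsWCharOf (C : TriSet K σ) (G : Set (MvPolynomial σ K)) : Prop :=
  (∀ e ∈ C.elems, e.2 ∈ G ∧
    ∀ g ∈ G, HasLV g e.1 → ∀ mg me, IsLeadMon g mg → IsLeadMon e.2 me → lexLe me mg) ∧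
  (∀ g ∈ G, ∀ i : σ, HasLV g i → i ∈ C.lvs)

/-- The Sylvester-style matrix of two univariate polynomials. -/
noncomputable def sylvester {R : Type*} [CommRing R] (f g : Polynomial R) :
    Matrix (Fin (f.natDegree + g.natDegree)) (Fin (f.natDegree + g.natDegree)) R :=
  Matrix.of fun i j =>
    if (i : ℕ) < g.natDegree then
      (if (i : ℕ) ≤ (j : ℕ) then f.coeff ((j : ℕ) - (i : ℕ)) else 0)
    else
      (if (i : ℕ) - g.natDegree ≤ (j : ℕ) then g.coeff ((j : ℕ) - ((i : ℕ) - g.natDegree))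
       else 0)

/-- The resultant of two univariate polynomials, as the determinant of their
Sylvester matrix. -/
noncomputable def resultantP {R : Type*} [CommRing R] (f g : Polynomial R) : R :=
  (sylvester f g).det

/-- View a multivariate polynomial as a univariate polynomial in the variable `i`. -/
noncomputable def toUni (i : σ) (f : MvPolynomial σ K) :
    Polynomial (MvPolynomial σ K) :=
  aeval (fun j => if j = i then Polynomial.X else Polynomial.C (X j)) f

/-- The resultant of two multivariate polynomials with respect to the variable `i`. -/
noncomputable def resWrt (i : σ) (f g : MvPolynomial σ K) : MvPolynomial σ K :=
  resultantP (toUni i f) (toUni i g)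

/-- The iterated resultant of `f` with respect to a list of
(leading variable, divisor) pairs, used from the head of the list on. -/
noncomputable def iterRes : MvPolynomial σ K → List (σ × MvPolynomial σ K) →
    MvPolynomial σ K
  | f, [] => f
  | f, e :: L => iterRes (resWrt e.1 f e.2) L

end CharDec


namespace CharDec

variable {K : Type*} [Field K] {σ : Type*} [LinearOrder σ]

set_option linter.unusedSectionVars false

lemma degreeOf_eq_zero_iff' {i : σ} {f : MvPolynomial σ K} :
    degreeOf i f = 0 ↔ i ∉ f.vars := by
  rw [degreeOf_eq_sup]
  rw [show (0 : ℕ) = ⊥ from rfl, Finset.sup_eq_bot_iff]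
  constructor
  · intro h hv
    obtain ⟨m, hm, him⟩ := (mem_vars i).1 hv
    exact Finsupp.mem_support_iff.1 him (h m hm)
  · intro hv m hm
    by_contra h
    exact hv ((mem_vars i).2 ⟨m, hm, Finsupp.mem_support_iff.2 h⟩)

lemma toUni_eq_C {i : σ} {g : MvPolynomial σ K} (h : i ∉ g.vars) :
    toUni i g = Polynomial.C g := by
  have h1 : toUni i g = aeval (fun j => Polynomial.C (X j)) g := by
    rw [toUni, aeval_def, aeval_def]
    apply eval₂_congr
    intro j c hj hc
    have hjv : j ∈ g.vars := (mem_vars j).2 ⟨c, mem_support_iff.2 hc, hj⟩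
    have : j ≠ i := fun e => h (e ▸ hjv)
    simp [this]
  rw [h1]
  have h2 : (aeval fun j => Polynomial.C (X j : MvPolynomial σ K)) =
      ((Polynomial.CAlgHom (R := K) (A := MvPolynomial σ K)).comp
        (aeval (R := K) X)) := by
    rw [comp_aeval]; rfl
  rw [h2]
  simp [Polynomial.CAlgHom, aeval_X_left_apply]

lemma eval_toUni (i : σ) (f : MvPolynomial σ K) :
    Polynomial.eval (X i) (toUni i f) = f := by
  induction f using MvPolynomial.induction_on with
  | C a => simp [toUni]
  | add p q hp hq =>
      simp only [toUni, map_add, Polynomial.eval_add] at *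
      rw [hp, hq]
  | mul_X p j hp =>
      simp only [toUni, map_mul, Polynomial.eval_mul] at *
      rw [hp]
      congr 1
      by_cases hj : j = i <;> simp [hj]

lemma toUni_injective (i : σ) : Function.Injective (toUni i (K := K) (σ := σ)) := by
  intro f g h
  have := congrArg (Polynomial.eval (X i)) h
  rwa [eval_toUni, eval_toUni] at this

set_option linter.unusedSectionVars false

lemma toUni_mul (i : σ) (f g : MvPolynomial σ K) :
    toUni i (f * g) = toUni i f * toUni i g := map_mul _ _ _

lemma toUni_add (i : σ) (f g : MvPolynomial σ K) :
    toUni i (f + g) = toUni i f + toUni i g := map_add _ _ _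

lemma toUni_pow (i : σ) (f : MvPolynomial σ K) (k : ℕ) :
    toUni i (f ^ k) = toUni i f ^ k := map_pow _ _ _

lemma toUni_sum {α : Type*} (i : σ) (s : Finset α) (f : α → MvPolynomial σ K) :
    toUni i (∑ x ∈ s, f x) = ∑ x ∈ s, toUni i (f x) := map_sum _ _ _

lemma toUni_zero (i : σ) : toUni i (0 : MvPolynomial σ K) = 0 := map_zero _

lemma update_add_single (i : σ) (m : σ →₀ ℕ) :
    m.update i 0 + Finsupp.single i (m i) = m := by
  ext j
  classical
  by_cases hj : j = i
  · simp [Finsupp.coe_update, Function.update_apply, Finsupp.single_apply, hj]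
  · have : ¬ i = j := fun e => hj e.symm
    simp [Finsupp.coe_update, Function.update_apply, Finsupp.single_apply, hj, this]

lemma not_mem_vars_monomial_update (i : σ) (m : σ →₀ ℕ) (c : K) :
    i ∉ (monomial (m.update i 0) c).vars := by
  intro hv
  obtain ⟨d, hd, hid⟩ := (mem_vars i).1 hv
  have := support_monomial_subset hd
  simp only [Finset.mem_singleton] at this
  subst this
  classical
  simp [Finsupp.coe_update] at hid

lemma toUni_monomial (i : σ) (m : σ →₀ ℕ) (c : K) :
    toUni i (monomial m c) =
      Polynomial.C (monomial (m.update i 0) c) * Polynomial.X ^ (m i) := by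
  have hm : monomial m c = monomial (m.update i 0) c * X i ^ (m i) := by
    rw [X_pow_eq_monomial, monomial_mul, mul_one, update_add_single]
  rw [hm, toUni_mul, toUni_pow, toUni_eq_C (not_mem_vars_monomial_update i m c)]
  congr 1
  simp [toUni]

lemma coeff_toUni (i : σ) (d : ℕ) (f : MvPolynomial σ K) :
    (toUni i f).coeff d = coeffWrt i d f := by
  conv_lhs => rw [← support_sum_monomial_coeff f]
  rw [toUni_sum, Polynomial.finset_sum_coeff]
  rw [coeffWrt, Finset.sum_filter]
  apply Finset.sum_congr rfl
  intro m _
  rw [toUni_monomial, Polynomial.coeff_C_mul, Polynomial.coeff_X_pow]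
  by_cases h : m i = d
  · simp [h]
  · have : ¬ d = m i := fun e => h e.symm
    simp [h, this]


lemma support_coeffWrt {i : σ} {d : ℕ} {f : MvPolynomial σ K} {μ : σ →₀ ℕ}
    (h : μ ∈ (coeffWrt i d f).support) :
    ∃ m ∈ f.support, m i = d ∧ μ = m.update i 0 := by
  rw [mem_support_iff, coeffWrt, coeff_sum] at h
  obtain ⟨m, hm, hne⟩ := Finset.exists_ne_zero_of_sum_ne_zero h
  rw [Finset.mem_filter] at hm
  rw [coeff_monomial] at hne
  refine ⟨m, hm.1, hm.2, ?_⟩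
  by_cases he : m.update i 0 = μ
  · exact he.symm
  · simp [he] at hne

lemma coeffWrt_ne_zero_iff {i : σ} {d : ℕ} {f : MvPolynomial σ K} :
    coeffWrt i d f ≠ 0 ↔ ∃ m ∈ f.support, m i = d := by
  constructor
  · intro h
    obtain ⟨μ, hμ⟩ := support_nonempty.2 h
    obtain ⟨m, hm, hmi, _⟩ := support_coeffWrt hμ
    exact ⟨m, hm, hmi⟩
  · rintro ⟨m, hm, hmi⟩
    intro h0
    have hc : coeff (m.update i 0) (coeffWrt i d f) = f.coeff m := by
      rw [coeffWrt, coeff_sum]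
      have key : ∀ m' ∈ f.support.filter (fun m' => m' i = d),
          coeff (m.update i 0) (monomial (m'.update i 0) (f.coeff m')) =
            if m' = m then f.coeff m' else 0 := by
        intro m' hm'
        rw [Finset.mem_filter] at hm'
        rw [coeff_monomial]
        have hiff : (m'.update i 0 = m.update i 0) ↔ (m' = m) := by
          constructor
          · intro he
            ext j
            by_cases hj : j = i
            · subst hj; rw [hm'.2, hmi]
            · have := congrFun (congrArg (fun g : σ →₀ ℕ => (g : σ → ℕ)) he) j
              classical
              simpa [Finsupp.coe_update, Function.update_apply, hj] using this
          · intro he; rw [he]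
        simp only [hiff]
      rw [Finset.sum_congr rfl key, Finset.sum_ite_eq']
      simp [Finset.mem_filter, hm, hmi]
    rw [h0] at hc
    simp only [coeff_zero] at hc
    exact (mem_support_iff.1 hm) hc.symm

lemma mem_support_degreeOf_le {i : σ} {f : MvPolynomial σ K} {m : σ →₀ ℕ}
    (hm : m ∈ f.support) : m i ≤ degreeOf i f := by
  rw [degreeOf_eq_sup]; exact Finset.le_sup (f := fun m => m i) hm

lemma coeffWrt_eq_zero_of_lt {i : σ} {d : ℕ} {f : MvPolynomial σ K}
    (h : degreeOf i f < d) : coeffWrt i d f = 0 := by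
  by_contra h0
  obtain ⟨m, hm, hmi⟩ := coeffWrt_ne_zero_iff.1 h0
  exact absurd (hmi ▸ mem_support_degreeOf_le hm) (Nat.not_le.2 h)

lemma natDegree_toUni (i : σ) (f : MvPolynomial σ K) :
    (toUni i f).natDegree = degreeOf i f := by
  by_cases hf : f = 0
  · simp [hf, toUni_zero]
  apply le_antisymm
  · rw [Polynomial.natDegree_le_iff_coeff_eq_zero]
    intro d hd
    rw [coeff_toUni]
    exact coeffWrt_eq_zero_of_lt hd
  · obtain ⟨m, hm⟩ := support_nonempty.2 hf
    obtain ⟨m₀, hm₀, hsup⟩ := Finset.exists_mem_eq_sup f.support ⟨m, hm⟩ (fun m => m i)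
    apply Polynomial.le_natDegree_of_ne_zero
    rw [coeff_toUni]
    exact coeffWrt_ne_zero_iff.2 ⟨m₀, hm₀, by rw [degreeOf_eq_sup, hsup]⟩

lemma initialWrt_eq_leadingCoeff (i : σ) (f : MvPolynomial σ K) :
    initialWrt i f = (toUni i f).leadingCoeff := by
  rw [Polynomial.leadingCoeff, natDegree_toUni, coeff_toUni, initialWrt]

lemma toUni_ne_zero {i : σ} {f : MvPolynomial σ K} (hf : f ≠ 0) : toUni i f ≠ 0 :=
  fun h => hf (toUni_injective i (h.trans (toUni_zero i).symm))

lemma initialWrt_ne_zero {i : σ} {f : MvPolynomial σ K} (hf : f ≠ 0) :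
    initialWrt i f ≠ 0 := by
  rw [initialWrt_eq_leadingCoeff]
  exact Polynomial.leadingCoeff_ne_zero.2 (toUni_ne_zero hf)

lemma degreeOf_mul_eq' {f g : MvPolynomial σ K} (i : σ) (hf : f ≠ 0) (hg : g ≠ 0) :
    degreeOf i (f * g) = degreeOf i f + degreeOf i g := by
  rw [← natDegree_toUni, ← natDegree_toUni, ← natDegree_toUni, toUni_mul,
    Polynomial.natDegree_mul (toUni_ne_zero hf) (toUni_ne_zero hg)]

lemma initialWrt_mul (i : σ) (f g : MvPolynomial σ K) :
    initialWrt i (f * g) = initialWrt i f * initialWrt i g := by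
  rw [initialWrt_eq_leadingCoeff, initialWrt_eq_leadingCoeff, initialWrt_eq_leadingCoeff,
    toUni_mul, Polynomial.leadingCoeff_mul]

lemma coeffWrt_mul_right {i : σ} {g : MvPolynomial σ K} (d : ℕ) (f : MvPolynomial σ K)
    (h : i ∉ g.vars) : coeffWrt i d (f * g) = coeffWrt i d f * g := by
  rw [← coeff_toUni, toUni_mul, toUni_eq_C h, Polynomial.coeff_mul_C, coeff_toUni]

lemma coeffWrt_add (i : σ) (d : ℕ) (f g : MvPolynomial σ K) :
    coeffWrt i d (f + g) = coeffWrt i d f + coeffWrt i d g := by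
  rw [← coeff_toUni, toUni_add, Polynomial.coeff_add, coeff_toUni, coeff_toUni]

lemma degreeOf_coeffWrt_le {i j : σ} (hij : j ≠ i) (d : ℕ) (f : MvPolynomial σ K) :
    degreeOf j (coeffWrt i d f) ≤ degreeOf j f := by
  rw [degreeOf_le_iff]
  intro μ hμ
  obtain ⟨m, hm, _, hμm⟩ := support_coeffWrt hμ
  have : μ j = m j := by
    classical
    simp [hμm, Finsupp.coe_update, Function.update_apply, hij]
  rw [this]
  exact mem_support_degreeOf_le hm

lemma vars_coeffWrt_subset (i : σ) (d : ℕ) (f : MvPolynomial σ K) :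
    (coeffWrt i d f).vars ⊆ f.vars := by
  intro j hj
  obtain ⟨μ, hμ, hjμ⟩ := (mem_vars j).1 hj
  obtain ⟨m, hm, _, hμm⟩ := support_coeffWrt hμ
  rw [Finsupp.mem_support_iff] at hjμ
  by_cases hji : j = i
  · subst hji
    classical
    simp [hμm, Finsupp.coe_update] at hjμ
  · have : μ j = m j := by
      classical
      simp [hμm, Finsupp.coe_update, Function.update_apply, hji]
    exact (mem_vars j).2 ⟨m, hm, Finsupp.mem_support_iff.2 (this ▸ hjμ)⟩

lemma not_mem_vars_coeffWrt (i : σ) (d : ℕ) (f : MvPolynomial σ K) :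
    i ∉ (coeffWrt i d f).vars := by
  intro hv
  obtain ⟨μ, hμ, hiμ⟩ := (mem_vars i).1 hv
  obtain ⟨m, hm, _, hμm⟩ := support_coeffWrt hμ
  rw [Finsupp.mem_support_iff] at hiμ
  classical
  simp [hμm, Finsupp.coe_update] at hiμ

lemma vars_initialWrt_subset (i : σ) (f : MvPolynomial σ K) :
    (initialWrt i f).vars ⊆ f.vars := vars_coeffWrt_subset _ _ _

lemma not_mem_vars_initialWrt (i : σ) (f : MvPolynomial σ K) :
    i ∉ (initialWrt i f).vars := not_mem_vars_coeffWrt _ _ _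

lemma degreeOf_initialWrt_of_coeffWrt {i : σ} {d : ℕ} {R : MvPolynomial σ K}
    (h0 : coeffWrt i d R ≠ 0) (hhigh : ∀ k, d < k → coeffWrt i k R = 0) :
    degreeOf i R = d ∧ initialWrt i R = coeffWrt i d R := by
  have hge : d ≤ degreeOf i R := by
    obtain ⟨m, hm, hmi⟩ := coeffWrt_ne_zero_iff.1 h0
    exact hmi ▸ mem_support_degreeOf_le hm
  have hle : degreeOf i R ≤ d := by
    by_contra hlt
    push_neg at hlt
    have hR : R ≠ 0 := by
      intro h; rw [h] at h0; exact h0 (by simp [coeffWrt])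
    obtain ⟨m, hm⟩ := support_nonempty.2 hR
    obtain ⟨m₀, hm₀, hsup⟩ := Finset.exists_mem_eq_sup R.support ⟨m, hm⟩ (fun m => m i)
    have : coeffWrt i (degreeOf i R) R ≠ 0 :=
      coeffWrt_ne_zero_iff.2 ⟨m₀, hm₀, by rw [degreeOf_eq_sup, hsup]⟩
    exact this (hhigh _ hlt)
  have hd : degreeOf i R = d := le_antisymm hle hge
  exact ⟨hd, by rw [initialWrt, hd]⟩


lemma eat {y : σ} {Q T B W : MvPolynomial σ K} (hQ0 : Q ≠ 0)
    (hT : y ∉ T.vars) (heq : T = B * Q + W)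
    (hW : degreeOf y W < degreeOf y Q) : B = 0 ∧ W = T := by
  have hB : B = 0 := by
    by_contra hB
    have h1 : degreeOf y (B * Q) = degreeOf y B + degreeOf y Q :=
      degreeOf_mul_eq' y hB hQ0
    have h2 : B * Q = T - W := by rw [heq]; ring
    have h3 : degreeOf y (T - W) ≤ max (degreeOf y T) (degreeOf y W) :=
      degreeOf_sub_le _ _ _
    have hTy : degreeOf y T = 0 := degreeOf_eq_zero_iff'.2 hT
    rw [← h2, h1, hTy] at h3
    omega
  refine ⟨hB, ?_⟩
  rw [heq, hB, zero_mul, zero_add]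

lemma prem_step {y z : σ} {Q P R : MvPolynomial σ K} (hyz : y < z)
    (hQy : y ∈ Q.vars) (hQvars : ∀ j ∈ Q.vars, j ≤ y)
    (hP0 : P ≠ 0) (hPvars : ∀ j ∈ P.vars, j ≤ z)
    (hiniP : y ∉ (initialWrt z P).vars)
    (hiniQ : y ∉ (initialWrt y Q).vars)
    (hpr : IsPrem y Q P R) :
    R ≠ 0 ∧ degreeOf z R = degreeOf z P ∧
    initialWrt z R =
      (initialWrt y Q) ^ (P.degreeOf y + 1 - Q.degreeOf y) * initialWrt z P ∧
    (∀ j ∈ R.vars, j ≤ z) := by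
  obtain ⟨A, heq, hdegR⟩ := hpr
  set I := initialWrt y Q with hI
  set q := P.degreeOf y + 1 - Q.degreeOf y with hq
  have hQ0 : Q ≠ 0 := by intro h; rw [h, vars_0] at hQy; exact absurd hQy (Finset.notMem_empty y)
  have hI0 : I ≠ 0 := initialWrt_ne_zero hQ0
  have hIq_vars : ∀ j ∈ (I ^ q).vars, j ∈ Q.vars := fun j hj =>
    vars_initialWrt_subset y Q (vars_pow _ _ hj)
  have hyIq : y ∉ (I ^ q).vars := fun h => hiniQ (vars_pow _ _ h)
  have key : ∀ (w : σ) (k : ℕ), w ∉ Q.vars → w ∉ (I ^ q).vars →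
      I ^ q * coeffWrt w k P = coeffWrt w k A * Q + coeffWrt w k R := by
    intro w k hwQ hwIq
    have heq' : P * I ^ q = A * Q + R := by rw [← heq]; ring
    have := congrArg (coeffWrt w k) heq'
    rw [coeffWrt_add, coeffWrt_mul_right k A hwQ, coeffWrt_mul_right k P hwIq] at this
    rw [← this]; ring
  have hzQ : z ∉ Q.vars := fun h => absurd (hQvars z h) (not_le.2 hyz)
  have hzIq : z ∉ (I ^ q).vars := fun h => hzQ (hIq_vars z h)
  have hRcoeff : ∀ (w : σ) (k : ℕ), w ≠ y → degreeOf y (coeffWrt w k R) < degreeOf y Q :=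
    fun w k hw => lt_of_le_of_lt (degreeOf_coeffWrt_le (Ne.symm hw) _ _) hdegR
  have hhigh : ∀ k, degreeOf z P < k → coeffWrt z k R = 0 := by
    intro k hk
    have h0 : coeffWrt z k P = 0 := coeffWrt_eq_zero_of_lt hk
    have hkey := key z k hzQ hzIq
    rw [h0, mul_zero] at hkey
    have := eat hQ0 (T := (0 : MvPolynomial σ K))
      (by rw [vars_0]; exact Finset.notMem_empty y) hkey
      (hRcoeff z k (fun e => absurd (e ▸ hyz) (lt_irrefl y)))
    exact this.2
  have hd : coeffWrt z (degreeOf z P) R = I ^ q * initialWrt z P := by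
    have hkey := key z (degreeOf z P) hzQ hzIq
    have e0 : coeffWrt z (degreeOf z P) P = initialWrt z P := rfl
    rw [e0] at hkey
    have hT : y ∉ (I ^ q * initialWrt z P).vars := by
      intro h
      rcases Finset.mem_union.1 (vars_mul _ _ h) with h | h
      · exact hyIq h
      · exact hiniP h
    exact (eat hQ0 hT hkey (hRcoeff z _ (fun e => absurd (e ▸ hyz) (lt_irrefl y)))).2
  have hRd0 : coeffWrt z (degreeOf z P) R ≠ 0 := by
    rw [hd]
    exact mul_ne_zero (pow_ne_zero _ hI0) (initialWrt_ne_zero hP0)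
  obtain ⟨hdeg, hini⟩ := degreeOf_initialWrt_of_coeffWrt hRd0 hhigh
  have hR0 : R ≠ 0 := by
    intro h; apply hRd0; rw [h]
    simp [coeffWrt]
  have hvars : ∀ j ∈ R.vars, j ≤ z := by
    intro w hw
    by_contra hwz
    push_neg at hwz
    have hwy : w ≠ y := fun e => absurd (e ▸ (hyz.trans hwz)) (lt_irrefl y)
    have hwP : w ∉ P.vars := fun h => absurd (hPvars w h) (not_le.2 hwz)
    have hwQ : w ∉ Q.vars := fun h => absurd ((hQvars w h).trans_lt hyz) (not_lt.2 hwz.le)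
    have hwIq : w ∉ (I ^ q).vars := fun h => hwQ (hIq_vars w h)
    obtain ⟨m, hm, hwm⟩ := (mem_vars w).1 hw
    have hk0 : 0 < m w := Nat.pos_of_ne_zero (Finsupp.mem_support_iff.1 hwm)
    have hRk : coeffWrt w (m w) R ≠ 0 := coeffWrt_ne_zero_iff.2 ⟨m, hm, rfl⟩
    have h0 : coeffWrt w (m w) P = 0 := by
      apply coeffWrt_eq_zero_of_lt
      have : degreeOf w P = 0 := degreeOf_eq_zero_iff'.2 hwP
      omega
    have hkey := key w (m w) hwQ hwIq
    rw [h0, mul_zero] at hkey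
    have := eat hQ0 (T := (0 : MvPolynomial σ K))
      (by rw [vars_0]; exact Finset.notMem_empty y) hkey (hRcoeff w _ hwy)
    exact hRk this.2
  exact ⟨hR0, hdeg, by rw [hini, hd], hvars⟩


lemma prem_chain {z : σ} (Good : σ → Prop) :
    ∀ (M : List (σ × MvPolynomial σ K)) (P R : MvPolynomial σ K),
      IterPrem P M R → P ≠ 0 → (∀ j ∈ P.vars, j ≤ z) →
      (∀ j ∈ (initialWrt z P).vars, Good j) →
      (∀ e ∈ M, HasLV e.2 e.1 ∧ e.1 < z ∧
        (∀ j ∈ (initialWrt e.1 e.2).vars, Good j) ∧ ¬ Good e.1) →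
      R ≠ 0 ∧ degreeOf z R = degreeOf z P ∧ (∀ j ∈ R.vars, j ≤ z) ∧
      ∃ qs : List ℕ, qs.length = M.length ∧
        initialWrt z R =
          (List.zipWith (fun e q => (initialWrt e.1 e.2) ^ q) M qs).prod *
            initialWrt z P := by
  intro M
  induction M with
  | nil =>
      intro P R hIt hP0 hPv hPi _
      have hRP : R = P := hIt
      subst hRP
      exact ⟨hP0, rfl, hPv, [], rfl, by simp⟩
  | cons e M ih =>
      intro P R hIt hP0 hPv hPi hM
      obtain ⟨S, hpr, hIt'⟩ := hIt
      obtain ⟨hlv, hez, hini, heG⟩ := hM e (List.mem_cons_self)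
      have step := prem_step hez hlv.1 hlv.2 hP0 hPv
        (fun h => heG (hPi _ h)) (fun h => heG (hini _ h)) hpr
      obtain ⟨hS0, hSdeg, hSini, hSv⟩ := step
      have hSi : ∀ j ∈ (initialWrt z S).vars, Good j := by
        rw [hSini]; intro j hj
        rcases Finset.mem_union.1 (vars_mul _ _ hj) with h | h
        · exact hini _ (vars_pow _ _ h)
        · exact hPi _ h
      obtain ⟨hR0, hRdeg, hRv, qs, hlen, hform⟩ :=
        ih S R hIt' hS0 hSv hSi (fun e' he' => hM e' (List.mem_cons_of_mem e he'))
      refine ⟨hR0, hRdeg.trans hSdeg, hRv,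
        (P.degreeOf e.1 + 1 - e.2.degreeOf e.1) :: qs, by simp [hlen], ?_⟩
      rw [hform, hSini]
      simp only [List.zipWith_cons_cons, List.prod_cons]
      ring

lemma vars_zipWith_prod (Good : σ → Prop) :
    ∀ (M : List (σ × MvPolynomial σ K)) (qs : List ℕ),
      (∀ e ∈ M, ∀ j ∈ (initialWrt e.1 e.2).vars, Good j) →
      ∀ j ∈ ((List.zipWith (fun e q => (initialWrt e.1 e.2) ^ q) M qs).prod).vars,
        Good j := by
  intro M
  induction M with
  | nil =>
      intro qs _ j hj
      simp only [List.zipWith_nil_left, List.prod_nil] at hj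
      rw [vars_one] at hj
      exact absurd hj (Finset.notMem_empty j)
  | cons e M ih =>
      intro qs h j hj
      cases qs with
      | nil =>
          simp only [List.zipWith_nil_right, List.prod_nil] at hj
          rw [vars_one] at hj
          exact absurd hj (Finset.notMem_empty j)
      | cons q qs =>
          simp only [List.zipWith_cons_cons, List.prod_cons] at hj
          rcases Finset.mem_union.1 (vars_mul _ _ hj) with h' | h'
          · exact h e (List.mem_cons_self) j (vars_pow _ _ h')
          · exact ih qs (fun e' he' => h e' (List.mem_cons_of_mem e he')) j h'


end CharDec

open CharDec MvPolynomial

/-- Let `C = [C_1,…,C_r]` be a normal triangular set (with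
its parameters ordered before its leading variables), and let
`C* = [C_1, prem(C_2,[C_1]), …, prem(C_r,[C_1,…,C_{r−1}])]`. Then `C*` is a
normal triangular set with the same leading variables and, for each `i`,
`ini(C_i*) = I_1^{q_1} ⋯ I_{i−1}^{q_{i−1}} · I_i` for suitable nonnegative
integers `q_j`, where `I_j = ini(C_j)`. -/
theorem stmt_9 {K : Type*} [Field K] {n : ℕ} (C : TriSet K (Fin n))
    (hnormal : C.Normal)
    (hord : ∀ j : Fin n, C.IsParam j → ∀ e ∈ C.elems, j < e.1)
    (Cs : List (MvPolynomial (Fin n) K)) (hlen : Cs.length = C.elems.length)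
    (hprem : ∀ i : ℕ, ∀ h : i < C.elems.length,
      IterPrem (C.elems.get ⟨i, h⟩).2 ((C.elems.take i).reverse)
        (Cs.get ⟨i, by omega⟩)) :
    ∀ i : ℕ, ∀ h : i < C.elems.length,
      HasLV (Cs.get ⟨i, by omega⟩) (C.elems.get ⟨i, h⟩).1 ∧
      (∀ j ∈ (initialWrt (C.elems.get ⟨i, h⟩).1 (Cs.get ⟨i, by omega⟩)).vars,
        C.IsParam j) ∧
      ∃ qs : List ℕ, qs.length = i ∧
        initialWrt (C.elems.get ⟨i, h⟩).1 (Cs.get ⟨i, by omega⟩) =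
          (List.zipWith (fun e q => (initialWrt e.1 e.2) ^ q) (C.elems.take i) qs).prod *
            initialWrt (C.elems.get ⟨i, h⟩).1 (C.elems.get ⟨i, h⟩).2 := by
  intro i h
  set z := (C.elems.get ⟨i, h⟩).1 with hz
  have hmem : C.elems.get ⟨i, h⟩ ∈ C.elems := List.get_mem _ _
  have hlvP := C.hlv _ hmem
  have hP0 : (C.elems.get ⟨i, h⟩).2 ≠ 0 := by
    intro h0
    have := hlvP.1
    rw [h0, vars_0] at this
    exact absurd this (Finset.notMem_empty _)
  have hMprop : ∀ e ∈ (C.elems.take i).reverse, HasLV e.2 e.1 ∧ e.1 < z ∧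
      (∀ j ∈ (initialWrt e.1 e.2).vars, C.IsParam j) ∧ ¬ C.IsParam e.1 := by
    intro e he
    rw [List.mem_reverse] at he
    have heC : e ∈ C.elems := List.mem_of_mem_take he
    have hdrop : C.elems.get ⟨i, h⟩ ∈ C.elems.drop i := by
      rw [List.get_eq_getElem, List.drop_eq_getElem_cons h]
      exact List.mem_cons_self
    exact ⟨C.hlv e heC, C.sorted.rel_of_mem_take_of_mem_drop he hdrop,
      hnormal e heC, fun hp => hp (List.mem_map_of_mem (f := Prod.fst) heC)⟩
  obtain ⟨hR0, hRdeg, hRv, qs, hlen, hform⟩ :=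
    prem_chain C.IsParam ((C.elems.take i).reverse) (C.elems.get ⟨i, h⟩).2
      (Cs.get ⟨i, by omega⟩) (hprem i h) hP0 hlvP.2 (hnormal _ hmem) hMprop
  have hdegPos : degreeOf z (C.elems.get ⟨i, h⟩).2 ≠ 0 := fun h0 =>
    absurd hlvP.1 (degreeOf_eq_zero_iff'.1 h0)
  refine ⟨⟨?_, hRv⟩, ?_, qs.reverse, ?_, ?_⟩
  · by_contra hzv
    exact hdegPos (hRdeg.symm.trans (degreeOf_eq_zero_iff'.2 hzv))
  · intro j hj
    rw [hform] at hj
    rcases Finset.mem_union.1 (vars_mul _ _ hj) with h' | h'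
    · exact vars_zipWith_prod C.IsParam _ qs
        (fun e he => (hMprop e he).2.2.1) j h'
    · exact hnormal _ hmem j h'
  · rw [List.length_reverse, hlen, List.length_reverse, List.length_take]
    omega
  · rw [hform]
    congr 1
    have hlen2 : (C.elems.take i).length = qs.reverse.length := by
      rw [List.length_reverse, hlen, List.length_reverse]
    have hkey : (List.zipWith (fun e q => (initialWrt e.1 e.2) ^ q)
          (C.elems.take i) qs.reverse).prod =
        (List.zipWith (fun e q => (initialWrt e.1 e.2) ^ q)
          (C.elems.take i).reverse qs).prod := by
      conv_lhs => rw [← List.prod_reverse, List.reverse_zipWith hlen2,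
        List.reverse_reverse]
    exact hkey.symm
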